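/- Let A : ℝ → Matrix (Fin n) (Fin n) ℝ be a continuous family of real n × n matrices, and let λ : ℝ → ℂ be continuous with λ(ε) an eigenvalue of A(ε) (as a complex matrix) for all ε ∈ [−a, b], where a, b > 0. Suppose λ(ε) is real for all ε ∈ [−a, 0] and λ(ε) is non-real for all ε ∈ (0, b]. Then λ(0) is a root of multiplicity at least 2 of the characteristic polynomial of A(0); i.e. (X − λ(0))² divides charpoly(A(0)) over ℂ. -/

import Mathlib

open Polynomial

private lemma eval_charpoly_real {n : ℕ} (M : Matrix (Fin n) (Fin n) ℝ) (z : ℝ) :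
    M.charpoly.eval z = (Matrix.scalar (Fin n) z - M).det := by
  rw [Matrix.charpoly, _root_.eval_det, Matrix.matPolyEquiv_charmatrix]
  simp

private lemma cont_eval {n : ℕ} (A : ℝ → Matrix (Fin n) (Fin n) ℝ)
    (hA : ∀ i j, Continuous fun ε => A ε i j) (z : ℝ) :
    Continuous fun ε => ((A ε).charpoly).eval z := by
  simp only [eval_charpoly_real]
  exact Continuous.matrix_det <| continuous_matrix fun i j => by
    simp only [Matrix.sub_apply]
    exact continuous_const.sub (hA i j)

private lemma cont_coeff {n : ℕ} (A : ℝ → Matrix (Fin n) (Fin n) ℝ)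
    (hA : ∀ i j, Continuous fun ε => A ε i j) (k : ℕ) :
    Continuous fun ε => ((A ε).charpoly).coeff k := by
  have hinj : Set.InjOn (Nat.cast : ℕ → ℝ) (Finset.range (n + 1)) :=
    fun x _ y _ h => Nat.cast_injective h
  have hdeg : ∀ ε, ((A ε).charpoly).degree < (Finset.range (n + 1)).card := by
    intro ε
    rw [Matrix.charpoly_degree_eq_dim, Fintype.card_fin, Finset.card_range]
    exact_mod_cast Nat.lt_succ_self n
  have hrep : (fun ε => ((A ε).charpoly).coeff k) =
      fun ε => ∑ i ∈ Finset.range (n + 1), ((A ε).charpoly).eval (i : ℝ) *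
        (Lagrange.basis (Finset.range (n + 1)) (Nat.cast : ℕ → ℝ) i).coeff k := by
    funext ε
    conv_lhs => rw [Lagrange.eq_interpolate hinj (hdeg ε)]
    rw [Lagrange.interpolate_apply, Polynomial.finset_sum_coeff]
    simp [coeff_C_mul]
  rw [hrep]
  exact continuous_finset_sum _ fun i _ => (cont_eval A hA _).mul continuous_const

/-- Theorem 3(b): if a continuous eigenvalue branch of a continuous family of real matrices
is real on `[-a, 0]` and non-real on `(0, b]`, then at `ε = 0` a multiple eigenvalue occurs:
`(X - λ(0))²` divides the characteristic polynomial of `A(0)` over `ℂ`. -/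
theorem multiple_eigenvalue_at_transition
    (n : ℕ) (A : ℝ → Matrix (Fin n) (Fin n) ℝ)
    (hA : ∀ i j, Continuous fun ε => A ε i j)
    (a b : ℝ) (ha : 0 < a) (hb : 0 < b)
    (lam : ℝ → ℂ) (hcont : Continuous lam)
    (heig : ∀ ε ∈ Set.Icc (-a) b, (((A ε).map (Complex.ofReal)).charpoly).IsRoot (lam ε))
    (hrealside : ∀ ε ∈ Set.Icc (-a) 0, (lam ε).im = 0)
    (hcomplexside : ∀ ε ∈ Set.Ioc 0 b, (lam ε).im ≠ 0) :
    (X - C (lam 0)) ^ 2 ∣ ((A 0).map (Complex.ofReal)).charpoly := by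
  classical
  set p : ℝ → Polynomial ℂ := fun ε => ((A ε).map Complex.ofReal).charpoly with hp
  have hmap : ∀ ε, p ε = ((A ε).charpoly).map Complex.ofRealHom := fun ε =>
    Matrix.charpoly_map (A ε) Complex.ofRealHom
  -- coefficients are continuous
  have hcoeff : ∀ k, Continuous fun ε => (p ε).coeff k := by
    intro k
    have : (fun ε => (p ε).coeff k) =
        fun ε => Complex.ofReal (((A ε).charpoly).coeff k) := by
      funext ε; rw [hmap ε, coeff_map]; rfl
    rw [this]
    exact Complex.continuous_ofReal.comp (cont_coeff A hA k)
  -- degrees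
  have hnat : ∀ ε, (p ε).natDegree = n := fun ε => by
    rw [hp]; simpa using Matrix.charpoly_natDegree_eq_dim ((A ε).map Complex.ofReal)
  -- conjugation commutes with evaluation
  have hconj : ∀ ε z, (p ε).eval ((starRingEnd ℂ) z) = (starRingEnd ℂ) ((p ε).eval z) := by
    intro ε z
    rw [hmap ε, eval_map, eval_map, Polynomial.hom_eval₂]
    congr 1
    exact RingHom.ext fun r => (Complex.conj_ofReal r).symm
  -- lam 0 is real
  have him0 : (lam 0).im = 0 := hrealside 0 ⟨neg_nonpos.2 ha.le, le_refl 0⟩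
  have hc0 : (starRingEnd ℂ) (lam 0) = lam 0 := Complex.conj_eq_iff_im.2 him0
  -- the divided-difference function
  set F : ℝ → ℂ := fun ε => ∑ k ∈ Finset.range (n + 1), (p ε).coeff k *
      ∑ j ∈ Finset.range k, (lam ε) ^ j * ((starRingEnd ℂ) (lam ε)) ^ (k - 1 - j) with hF
  have hconjcont : Continuous fun ε => (starRingEnd ℂ) (lam ε) := by
    simp only [starRingEnd_apply]
    exact hcont.star
  have hFcont : Continuous F := by
    apply continuous_finset_sum
    intro k _
    exact (hcoeff k).mul (continuous_finset_sum _ fun j _ =>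
      (hcont.pow j).mul (hconjcont.pow _))
  -- key algebraic identity
  have hFmul : ∀ ε, F ε * (lam ε - (starRingEnd ℂ) (lam ε)) =
      (p ε).eval (lam ε) - (p ε).eval ((starRingEnd ℂ) (lam ε)) := by
    intro ε
    rw [eval_eq_sum_range' (by rw [hnat ε]; exact Nat.lt_succ_self n) (lam ε),
      eval_eq_sum_range' (by rw [hnat ε]; exact Nat.lt_succ_self n) ((starRingEnd ℂ) (lam ε)),
      hF, Finset.sum_mul, ← Finset.sum_sub_distrib]
    refine Finset.sum_congr rfl fun k _ => ?_
    rw [mul_assoc, geom_sum₂_mul, mul_sub]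
  -- F vanishes on (0, b]
  have hzero : ∀ ε ∈ Set.Ioc 0 b, F ε = 0 := by
    intro ε hε
    have hεIcc : ε ∈ Set.Icc (-a) b := ⟨by linarith [hε.1], hε.2⟩
    have h1 : (p ε).eval (lam ε) = 0 := heig ε hεIcc
    have h2 : (p ε).eval ((starRingEnd ℂ) (lam ε)) = 0 := by rw [hconj, h1, map_zero]
    have h3 : lam ε - (starRingEnd ℂ) (lam ε) ≠ 0 := by
      intro h
      exact hcomplexside ε hε (Complex.conj_eq_iff_im.1 (sub_eq_zero.mp h).symm)
    have := hFmul ε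
    rw [h1, h2, sub_zero] at this
    exact (mul_eq_zero.mp this).resolve_right h3
  -- F 0 = 0 by continuity
  have hF0 : F 0 = 0 := by
    have hcl : (0 : ℝ) ∈ closure (Set.Ioc (0 : ℝ) b) := by
      rw [closure_Ioc (hb.ne : (0:ℝ) ≠ b)]; exact ⟨le_refl 0, hb.le⟩
    have hne : (nhdsWithin (0 : ℝ) (Set.Ioc 0 b)).NeBot :=
      mem_closure_iff_nhdsWithin_neBot.mp hcl
    have h1 : Filter.Tendsto F (nhdsWithin 0 (Set.Ioc 0 b)) (nhds (F 0)) :=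
      (hFcont.tendsto 0).mono_left nhdsWithin_le_nhds
    have h2 : Filter.Tendsto F (nhdsWithin 0 (Set.Ioc 0 b)) (nhds 0) := by
      apply Filter.Tendsto.congr' _ tendsto_const_nhds
      filter_upwards [self_mem_nhdsWithin] with x hx
      exact (hzero x hx).symm
    exact tendsto_nhds_unique h1 h2
  -- F 0 equals the derivative of p 0 at lam 0
  have hF0eq : F 0 = ((p 0).derivative).eval (lam 0) := by
    have hder : ((p 0).derivative).eval (lam 0) =
        ∑ k ∈ Finset.range (n + 1), (p 0).coeff k * (k * (lam 0) ^ (k - 1)) := by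
      conv_lhs => rw [(p 0).as_sum_range' (n + 1) (by rw [hnat 0]; exact Nat.lt_succ_self n)]
      rw [derivative_sum, eval_finset_sum]
      refine Finset.sum_congr rfl fun k _ => ?_
      rw [derivative_monomial, eval_monomial]
      ring
    rw [hder, hF]
    refine Finset.sum_congr rfl fun k _ => ?_
    congr 1
    rw [hc0]
    calc ∑ j ∈ Finset.range k, (lam 0) ^ j * (lam 0) ^ (k - 1 - j)
        = ∑ j ∈ Finset.range k, (lam 0) ^ (k - 1) := by
          refine Finset.sum_congr rfl fun j hj => ?_
          rw [← pow_add]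
          congr 1
          have := Finset.mem_range.mp hj
          omega
      _ = k * (lam 0) ^ (k - 1) := by
          rw [Finset.sum_const, Finset.card_range, nsmul_eq_mul]
  -- conclude
  have hev : (p 0).eval (lam 0) = 0 := heig 0 ⟨neg_nonpos.2 ha.le, hb.le⟩
  have hdev : ((p 0).derivative).eval (lam 0) = 0 := by rw [← hF0eq, hF0]
  obtain ⟨q, hq⟩ := dvd_iff_isRoot.mpr hev
  have hq' : q.eval (lam 0) = 0 := by
    have h3 : (p 0).derivative = q + (X - C (lam 0)) * q.derivative := by
      rw [hq, derivative_mul]; simp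
    have := hdev
    rw [h3] at this
    simpa using this
  obtain ⟨r, hr⟩ := dvd_iff_isRoot.mpr hq'
  have hfin : p 0 = (X - C (lam 0)) ^ 2 * r := by rw [hq, hr]; ring
  exact ⟨r, hfin⟩
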